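/- Let A be a pre-associative algebra with operations * and ·(juxtaposition) satisfying (x*y)*z = x*(y*z), (x*y)z = x(yz), and x(y*z) = (xy)*z + x(yz) − (xy)z. On the space Â = A ⊕ Ā (two copies of A, with the second copy written ū for u ∈ A), define u·v = u*v, ū·v = (u*v)‾ − (uv)‾, u·v̄ = (uv)‾, ū·v̄ = 0. Then Â is an associative algebra. -/
import Mathlib


variable {k A : Type*} [Field k] [AddCommGroup A] [Module k A]

/-- The multiplication on `Â = A ⊕ Ā` (a pair `(x, y)` represents `x + ȳ`):
`u·v = u*v`, `ū·v = (u*v)‾ − (uv)‾`, `u·v̄ = (uv)‾`, `ū·v̄ = 0`. -/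
def hatMul (st ju : A →ₗ[k] A →ₗ[k] A) (p q : A × A) : A × A :=
  (st p.1 q.1, st p.2 q.1 - ju p.2 q.1 + ju p.1 q.2)

/-- If `A` is a pre-associative (dendriform) algebra with operations `*` (`st`) and
juxtaposition (`ju`), then the multiplication defined above on `Â = A ⊕ Ā`
is associative, i.e. `Â` is an associative algebra. -/
theorem stmt_6 (st ju : A →ₗ[k] A →ₗ[k] A)
    (h1 : ∀ x y z : A, st (st x y) z = st x (st y z))
    (h2 : ∀ x y z : A, ju (st x y) z = ju x (ju y z))
    (h3 : ∀ x y z : A, ju x (st y z) = st (ju x y) z + ju x (ju y z) - ju (ju x y) z) :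
    ∀ p q r : A × A, hatMul st ju (hatMul st ju p q) r = hatMul st ju p (hatMul st ju q r) := by
  intro p q r
  simp only [hatMul, Prod.mk.injEq, map_add, map_sub, LinearMap.add_apply, LinearMap.sub_apply]
  refine ⟨h1 _ _ _, ?_⟩
  rw [h1, h2, h2 p.1 q.1 r.2, h3 p.2 q.1 r.1, h3 p.1 q.2 r.1]
  abel
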